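/- arXiv:0809.1985 — 2 statements merged into one kernel-verified Lean document; each statement's English description precedes it below -/
import Mathlib

section
/- Let σ > 0 and β ∈ ℝ, and set γ := √(β² + 2σ²). Define H : ℝ → ℝ by H(τ) = −2(e^{γτ} − 1) / ((γ − β)(e^{γτ} − 1) + 2γ). Then H(0) = 0 and, for every τ ≥ 0, H is differentiable at τ with H'(τ) = (σ²/2)·H(τ)² + β·H(τ) − 1. -/
/-- The CIR coefficient `H` satisfies `H 0 = 0` and the Riccati ODE
`H' = (σ²/2)·H² + β·H − 1` at every `τ ≥ 0`, where `γ = √(β² + 2σ²)`. -/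
theorem cir_H_riccati (σ β : ℝ) (hσ : 0 < σ) (γ : ℝ) (hγ : γ = Real.sqrt (β ^ 2 + 2 * σ ^ 2))
    (H : ℝ → ℝ)
    (hH : ∀ τ : ℝ, H τ =
      -2 * (Real.exp (γ * τ) - 1) / ((γ - β) * (Real.exp (γ * τ) - 1) + 2 * γ)) :
    H 0 = 0 ∧ ∀ τ : ℝ, 0 ≤ τ →
      HasDerivAt H (σ ^ 2 / 2 * (H τ) ^ 2 + β * H τ - 1) τ := by
  have hpos : (0:ℝ) < β ^ 2 + 2 * σ ^ 2 := by positivity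
  have hγ2 : γ ^ 2 = β ^ 2 + 2 * σ ^ 2 := by
    rw [hγ, Real.sq_sqrt hpos.le]
  have hγpos : 0 < γ := by rw [hγ]; exact Real.sqrt_pos.mpr hpos
  have hβγ : β ≤ γ := by
    calc β ≤ |β| := le_abs_self β
    _ = Real.sqrt (β ^ 2) := by rw [Real.sqrt_sq_eq_abs]
    _ ≤ γ := by rw [hγ]; exact Real.sqrt_le_sqrt (by nlinarith)
  constructor
  · rw [hH 0]; simp
  · intro τ hτ
    have hE : (1:ℝ) ≤ Real.exp (γ * τ) := Real.one_le_exp (by positivity)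
    have hg : (γ - β) * (Real.exp (γ * τ) - 1) + 2 * γ ≠ 0 := by
      have : 0 ≤ (γ - β) * (Real.exp (γ * τ) - 1) := by
        apply mul_nonneg <;> linarith
      nlinarith
    have hHeq : H = fun t => -2 * (Real.exp (γ * t) - 1) /
        ((γ - β) * (Real.exp (γ * t) - 1) + 2 * γ) := funext hH
    -- derivatives of numerator and denominator
    have hexp : HasDerivAt (fun t => Real.exp (γ * t)) (γ * Real.exp (γ * τ)) τ := by
      have := ((hasDerivAt_id τ).const_mul γ).exp
      simpa [mul_comm] using this
    have hf : HasDerivAt (fun t => -2 * (Real.exp (γ * t) - 1))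
        (-2 * (γ * Real.exp (γ * τ))) τ := ((hexp.sub_const 1).const_mul (-2))
    have hgd : HasDerivAt (fun t => (γ - β) * (Real.exp (γ * t) - 1) + 2 * γ)
        ((γ - β) * (γ * Real.exp (γ * τ))) τ := by
      simpa using ((hexp.sub_const 1).const_mul (γ - β)).add_const (2 * γ)
    have hdiv := hf.div hgd hg
    rw [hHeq]
    convert hdiv using 1
    iterate 3 rfl
    beta_reduce
    set E := Real.exp (γ * τ) with hEdef
    have hσ2 : σ ^ 2 = (γ ^ 2 - β ^ 2) / 2 := by linarith
    rw [hσ2]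
    have hg' : (E - 1) * (γ - β) + γ * 2 ≠ 0 := by
      convert hg using 1; ring
    field_simp
    ring
end

section
/- Let C > 1 be real. Then for all real x and k, (e^x − e^k)⁺ = (1/(2π)) · ∫_ℝ e^{(C+iλ)x} · e^{k(1−C−iλ)} / ((C+iλ)(C+iλ−1)) dλ, where (e^x − e^k)⁺ := max(e^x − e^k, 0), the integrand is complex valued, and the integral converges absolutely; in particular the (a priori complex) integral is real. -/
open Complex MeasureTheory Real Set Filter
open scoped FourierTransform

private lemma expIoi_integrableOn (a : ℂ) (ha : a.re < 0) (c : ℝ) :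
    IntegrableOn (fun y : ℝ => Complex.exp (a * y)) (Ioi c) := by
  refine Integrable.mono' (exp_neg_integrableOn_Ioi c (neg_pos.2 ha)) ?_ ?_
  · exact (Complex.continuous_exp.comp
      (continuous_const.mul Complex.continuous_ofReal)).aestronglyMeasurable
  · filter_upwards with y
    have h : ‖Complex.exp (a * y)‖ = Real.exp (a.re * y) := by
      rw [Complex.norm_exp]
      congr 1
      simp [Complex.mul_re]
    rw [h]; simp

private lemma expIoi_integral (a : ℂ) (ha : a.re < 0) (c : ℝ) :
    ∫ y in Ioi c, Complex.exp (a * y) = -Complex.exp (a * c) / a := by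
  have ha0 : a ≠ 0 := fun h => by simp [h] at ha
  have D : ∀ t : ℝ, HasDerivAt (fun y : ℝ => Complex.exp (a * y) / a)
      (Complex.exp (a * t)) t := by
    intro t
    conv in Complex.exp (a * (t:ℂ)) => rw [← mul_div_cancel_right₀ (Complex.exp (a * t)) ha0]
    apply ((Complex.hasDerivAt_exp _).comp t _).div_const a
    simpa only [mul_one, id_eq] using ((hasDerivAt_id (t : ℂ)).const_mul a).comp_ofReal
  have T : Tendsto (fun y : ℝ => Complex.exp (a * y) / a) atTop (nhds 0) := by
    rw [tendsto_zero_iff_norm_tendsto_zero]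
    have h2 : Tendsto (fun y : ℝ => a.re * y) atTop atBot :=
      tendsto_const_mul_atBot_of_neg ha |>.2 tendsto_id
    have h3 : Tendsto (fun y : ℝ => Real.exp (a.re * y) / ‖a‖) atTop (nhds 0) := by
      simpa using (Real.tendsto_exp_atBot.comp h2).div_const ‖a‖
    refine h3.congr fun y => ?_
    rw [norm_div, Complex.norm_exp]
    congr 2
    simp [Complex.mul_re]
  have := integral_Ioi_of_hasDerivAt_of_tendsto' (fun t _ => D t)
    (expIoi_integrableOn a ha c) T
  rw [this]
  ring

private lemma denom1_ne (C : ℝ) (hC : 1 < C) (l : ℝ) : (C : ℂ) + l * Complex.I ≠ 0 := by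
  intro h
  have := congrArg Complex.re h
  simp at this
  linarith

private lemma denom2_ne (C : ℝ) (hC : 1 < C) (l : ℝ) : (C : ℂ) + l * Complex.I - 1 ≠ 0 := by
  intro h
  have := congrArg Complex.re h
  simp at this
  linarith

private lemma norm_denom1_ge (C : ℝ) (hC : 1 < C) (l : ℝ) :
    Real.sqrt (1 + l ^ 2) ≤ ‖(C : ℂ) + l * Complex.I‖ := by
  rw [Complex.norm_def, Complex.normSq_apply]
  apply Real.sqrt_le_sqrt
  simp
  nlinarith

private lemma norm_denom2_ge (C : ℝ) (hC : 1 < C) (l : ℝ) :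
    min (C - 1) 1 * Real.sqrt (1 + l ^ 2) ≤ ‖(C : ℂ) + l * Complex.I - 1‖ := by
  have hd0 : 0 < min (C - 1) 1 := lt_min (by linarith) one_pos
  rw [Complex.norm_def, Complex.normSq_apply]
  rw [show min (C - 1) 1 * Real.sqrt (1 + l ^ 2)
      = Real.sqrt (min (C - 1) 1 ^ 2 * (1 + l ^ 2)) by
    rw [Real.sqrt_mul (by positivity), Real.sqrt_sq hd0.le]]
  apply Real.sqrt_le_sqrt
  have h1 : min (C - 1) 1 ≤ C - 1 := min_le_left _ _
  have h2 : min (C - 1) 1 ≤ 1 := min_le_right _ _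
  simp
  nlinarith [mul_self_le_mul_self hd0.le h1, mul_self_le_mul_self hd0.le h2, sq_nonneg l,
    mul_le_of_le_one_left (sq_nonneg l) (by nlinarith [mul_self_le_mul_self hd0.le h2] :
      min (C - 1) 1 ^ 2 ≤ 1)]

private lemma integrable_aux (C : ℝ) (hC : 1 < C) (u : ℝ → ℂ) (hu : Continuous u)
    (M : ℝ) (hM : ∀ l, ‖u l‖ ≤ M) :
    Integrable (fun l : ℝ => u l / (((C : ℂ) + l * Complex.I) * ((C : ℂ) + l * Complex.I - 1)))
      volume := by
  set d := min (C - 1) 1 with hd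
  have hd0 : 0 < d := lt_min (by linarith) one_pos
  have hM0 : 0 ≤ M := le_trans (norm_nonneg _) (hM 0)
  refine Integrable.mono' (integrable_inv_one_add_sq.const_mul (M / d)) ?_ ?_
  · apply Continuous.aestronglyMeasurable
    apply hu.div
    · continuity
    · exact fun l => mul_ne_zero (denom1_ne C hC l) (denom2_ne C hC l)
  · filter_upwards with l
    have hs : 0 < Real.sqrt (1 + l ^ 2) := Real.sqrt_pos.2 (by positivity)
    have h1 := norm_denom1_ge C hC l
    have h2 := norm_denom2_ge C hC l
    have hprod : d * (1 + l ^ 2) ≤ ‖((C : ℂ) + l * Complex.I) * ((C : ℂ) + l * Complex.I - 1)‖ := by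
      rw [norm_mul]
      calc d * (1 + l ^ 2) = Real.sqrt (1 + l ^ 2) * (d * Real.sqrt (1 + l ^ 2)) := by
            have e : Real.sqrt (1 + l ^ 2) ^ 2 = 1 + l ^ 2 :=
              Real.sq_sqrt (by positivity)
            linear_combination -d * e
        _ ≤ _ := by
            apply mul_le_mul h1 h2 (by positivity) (norm_nonneg _)
    rw [norm_div]
    calc ‖u l‖ / ‖((C : ℂ) + l * Complex.I) * ((C : ℂ) + l * Complex.I - 1)‖
        ≤ M / (d * (1 + l ^ 2)) := by
          apply div_le_div₀ hM0 (hM l) (by positivity) hprod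
      _ = M / d * (1 + l ^ 2)⁻¹ := by
          field_simp

private noncomputable def payoff (C k : ℝ) : ℝ → ℂ :=
  fun y => ((max (Real.exp y - Real.exp k) 0 : ℝ) : ℂ) * Complex.exp (-((C : ℂ) * y))

private lemma payoff_eq_indicator (C k : ℝ) :
    payoff C k = (Ioi k).indicator fun y : ℝ =>
      Complex.exp (((1 : ℂ) - C) * y) - Real.exp k * Complex.exp ((-C : ℂ) * y) := by
  funext y
  rcases le_or_gt y k with h | h
  · have h0 : Real.exp y - Real.exp k ≤ 0 := sub_nonpos.2 (Real.exp_le_exp.2 h)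
    rw [indicator_of_notMem (by simpa using h)]
    simp [payoff, max_eq_right h0]
  · rw [indicator_of_mem (show y ∈ Ioi k from h)]
    have hmax : max (Real.exp y - Real.exp k) 0 = Real.exp y - Real.exp k :=
      max_eq_left (sub_nonneg.2 (Real.exp_le_exp.2 h.le))
    rw [payoff, hmax, Complex.ofReal_sub, sub_mul]
    congr 1
    · rw [Complex.ofReal_exp, ← Complex.exp_add]
      congr 1
      push_cast
      ring
    · congr 1
      push_cast
      ring

private lemma payoff_integrable (C k : ℝ) (hC : 1 < C) : Integrable (payoff C k) := by
  rw [payoff_eq_indicator, integrable_indicator_iff measurableSet_Ioi]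
  apply Integrable.sub
  · exact expIoi_integrableOn ((1 : ℂ) - C) (by simp; linarith) k
  · exact (expIoi_integrableOn ((-C : ℂ)) (by simp; linarith) k).const_mul _

private lemma payoff_continuous (C k : ℝ) : Continuous (payoff C k) := by
  apply Continuous.mul
  · exact Complex.continuous_ofReal.comp
      ((Real.continuous_exp.sub continuous_const).max continuous_const)
  · exact Complex.continuous_exp.comp (continuous_const.mul Complex.continuous_ofReal).neg

private lemma payoff_fourier (C k : ℝ) (hC : 1 < C) (ξ : ℝ) :
    𝓕 (payoff C k) ξ = Complex.exp ((k : ℂ) * (1 - C - ((2 * π * ξ : ℝ) : ℂ) * Complex.I)) /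
      (((C : ℂ) + ((2 * π * ξ : ℝ) : ℂ) * Complex.I) *
        ((C : ℂ) + ((2 * π * ξ : ℝ) : ℂ) * Complex.I - 1)) := by
  set w : ℂ := ((2 * π * ξ : ℝ) : ℂ) * Complex.I with hw
  have hwre : w.re = 0 := by simp [hw]
  have ha1 : ((1 : ℂ) - C - w).re < 0 := by simp [hwre]; linarith
  have ha2 : ((-C : ℂ) - w).re < 0 := by simp [hwre]; linarith
  have ha1' : (1 : ℂ) - C - w ≠ 0 := fun h => by rw [h] at ha1; simp at ha1
  have ha2' : (-C : ℂ) - w ≠ 0 := fun h => by rw [h] at ha2; simp at ha2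
  have hs1 : (C : ℂ) + w ≠ 0 := denom1_ne C hC (2 * π * ξ)
  have hs2 : (C : ℂ) + w - 1 ≠ 0 := denom2_ne C hC (2 * π * ξ)
  have key : ∀ v : ℝ, Complex.exp (↑(-2 * π * v * ξ) * Complex.I) • payoff C k v
      = (Ioi k).indicator (fun y : ℝ =>
          Complex.exp (((1 : ℂ) - C - w) * y)
            - Real.exp k * Complex.exp (((-C : ℂ) - w) * y)) v := by
    intro v
    rcases le_or_gt v k with h | h
    · have h0 : Real.exp v - Real.exp k ≤ 0 := sub_nonpos.2 (Real.exp_le_exp.2 h)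
      rw [indicator_of_notMem (show v ∉ Ioi k by simpa using h)]
      simp [payoff, max_eq_right h0]
    · rw [indicator_of_mem (show v ∈ Ioi k from h)]
      simp only [payoff, smul_eq_mul, max_eq_left (sub_nonneg.2 (Real.exp_le_exp.2 h.le)),
        Complex.ofReal_sub, Complex.ofReal_exp]
      rw [show ((-C : ℂ) - w) * v = ↑(-2 * π * v * ξ) * Complex.I + -((C : ℂ) * v) by
          rw [hw]; push_cast; ring,
        show ((1 : ℂ) - C - w) * v = ↑(-2 * π * v * ξ) * Complex.I + ((v : ℂ) + -((C : ℂ) * v)) by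
          rw [hw]; push_cast; ring,
        Complex.exp_add, Complex.exp_add, Complex.exp_add]
      ring
  rw [Real.fourier_real_eq_integral_exp_smul]
  calc (∫ v : ℝ, Complex.exp (↑(-2 * π * v * ξ) * Complex.I) • payoff C k v)
      = ∫ v : ℝ, (Ioi k).indicator (fun y : ℝ =>
          Complex.exp (((1 : ℂ) - C - w) * y)
            - Real.exp k * Complex.exp (((-C : ℂ) - w) * y)) v := by
        exact integral_congr_ae (Filter.Eventually.of_forall key)
    _ = ∫ v in Ioi k, (Complex.exp (((1 : ℂ) - C - w) * v)
            - Real.exp k * Complex.exp (((-C : ℂ) - w) * v)) :=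
        integral_indicator measurableSet_Ioi
    _ = (∫ v in Ioi k, Complex.exp (((1 : ℂ) - C - w) * v))
          - ∫ v in Ioi k, (Real.exp k : ℂ) * Complex.exp (((-C : ℂ) - w) * v) :=
        integral_sub (expIoi_integrableOn _ ha1 k) ((expIoi_integrableOn _ ha2 k).const_mul _)
    _ = -Complex.exp (((1 : ℂ) - C - w) * k) / ((1 : ℂ) - C - w)
          - (Real.exp k : ℂ) * (-Complex.exp (((-C : ℂ) - w) * k) / ((-C : ℂ) - w)) := by
        rw [integral_const_mul, expIoi_integral _ ha1 k, expIoi_integral _ ha2 k]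
    _ = _ := by
        have E1 : Complex.exp (((1 : ℂ) - C - w) * k) = Complex.exp ((k : ℂ) * (1 - C - w)) := by
          rw [mul_comm]
        have E2 : (Real.exp k : ℂ) * Complex.exp (((-C : ℂ) - w) * k)
            = Complex.exp ((k : ℂ) * (1 - C - w)) := by
          rw [Complex.ofReal_exp, ← Complex.exp_add]
          congr 1
          ring
        have hE2 : (Real.exp k : ℂ) * (-Complex.exp (((-C : ℂ) - w) * ↑k) / ((-C : ℂ) - w))
            = -Complex.exp ((k : ℂ) * (1 - C - w)) / ((-C : ℂ) - w) := by
          linear_combination (-1 / ((-C : ℂ) - w)) * E2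
        rw [E1, hE2]
        field_simp
        ring

private lemma target_integrable (C : ℝ) (hC : 1 < C) (x k : ℝ) :
    Integrable (fun l : ℝ =>
      Complex.exp (((C : ℂ) + l * Complex.I) * x) * Complex.exp ((k : ℂ) * (1 - C - l * Complex.I)) /
        (((C : ℂ) + l * Complex.I) * ((C : ℂ) + l * Complex.I - 1))) volume := by
  apply integrable_aux C hC _ ?_ (Real.exp (C * x) * Real.exp (k * (1 - C)))
  · intro l
    rw [norm_mul, Complex.norm_exp, Complex.norm_exp]
    apply le_of_eq
    congr 1 <;> simp [Complex.mul_re, Complex.add_re, Complex.sub_re] <;> ring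
  · continuity

private lemma w_integrable (C k : ℝ) (hC : 1 < C) :
    Integrable (fun l : ℝ => Complex.exp ((k : ℂ) * (1 - C - l * Complex.I)) /
      (((C : ℂ) + l * Complex.I) * ((C : ℂ) + l * Complex.I - 1))) volume := by
  apply integrable_aux C hC _ ?_ (Real.exp (k * (1 - C)))
  · intro l
    rw [Complex.norm_exp]
    apply le_of_eq
    congr 1
    simp [Complex.mul_re, Complex.sub_re]
  · continuity

private lemma fourier_payoff_integrable (C k : ℝ) (hC : 1 < C) :
    Integrable (𝓕 (payoff C k)) volume := by
  have h2π : (2 * π : ℝ) ≠ 0 := by positivity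
  have h := (integrable_comp_mul_left_iff (fun l : ℝ =>
      Complex.exp ((k : ℂ) * (1 - C - l * Complex.I)) /
        (((C : ℂ) + l * Complex.I) * ((C : ℂ) + l * Complex.I - 1))) h2π).2
    (w_integrable C k hC)
  apply h.congr
  filter_upwards with ξ
  rw [payoff_fourier C k hC ξ]


/-- Fourier representation of the call payoff: for `C > 1` and all real `x, k`,
`(e^x − e^k)⁺ = (1/2π) ∫_ℝ e^{(C+iλ)x} e^{k(1−C−iλ)}/((C+iλ)(C+iλ−1)) dλ`, the integral
converging absolutely; in particular the a priori complex integral is real. -/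
theorem call_payoff_fourier (C : ℝ) (hC : 1 < C) (x k : ℝ) :
    Integrable (fun l : ℝ =>
      Complex.exp ((C + l * Complex.I) * x) * Complex.exp (k * (1 - C - l * Complex.I)) /
        ((C + l * Complex.I) * (C + l * Complex.I - 1))) volume ∧
    (↑(max (Real.exp x - Real.exp k) 0) : ℂ) = 1 / (2 * Real.pi) *
      ∫ l : ℝ, Complex.exp ((C + l * Complex.I) * x) *
        Complex.exp (k * (1 - C - l * Complex.I)) /
          ((C + l * Complex.I) * (C + l * Complex.I - 1)) := by
  refine ⟨target_integrable C hC x k, ?_⟩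
  set Φ : ℝ → ℂ := fun l => Complex.exp (((C : ℂ) + l * Complex.I) * x) *
      Complex.exp ((k : ℂ) * (1 - C - l * Complex.I)) /
      (((C : ℂ) + l * Complex.I) * ((C : ℂ) + l * Complex.I - 1)) with hΦ
  have inv := (payoff_integrable C k hC).fourierInv_fourier_eq (fourier_payoff_integrable C k hC)
    ((payoff_continuous C k).continuousAt (x := x))
  rw [Real.fourierInv_eq_fourier_neg,
    Real.fourier_real_eq_integral_exp_smul] at inv
  have step : ∀ v : ℝ, Complex.exp (↑(-2 * π * v * (-x)) * Complex.I) • 𝓕 (payoff C k) v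
      = Complex.exp (-((C : ℂ) * x)) * Φ (2 * π * v) := by
    intro v
    rw [payoff_fourier C k hC v, smul_eq_mul, hΦ]
    simp only []
    conv_rhs => rw [mul_div_assoc, ← mul_assoc, ← Complex.exp_add]
    congr 2
    push_cast
    ring
  rw [integral_congr_ae (Filter.Eventually.of_forall step), MeasureTheory.integral_const_mul,
    MeasureTheory.Measure.integral_comp_mul_left Φ (2 * π)] at inv
  have hπ : |(2 * π : ℝ)⁻¹| = (2 * π)⁻¹ := abs_of_pos (by positivity)
  rw [hπ] at inv
  have hexp : Complex.exp (-((C : ℂ) * x)) ≠ 0 := Complex.exp_ne_zero _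
  apply mul_right_cancel₀ hexp
  calc (↑(max (Real.exp x - Real.exp k) 0) : ℂ) * Complex.exp (-((C : ℂ) * x))
      = payoff C k x := rfl
    _ = Complex.exp (-((C : ℂ) * x)) * ((2 * π : ℝ)⁻¹ • ∫ l, Φ l) := inv.symm
    _ = 1 / (2 * (Real.pi : ℂ)) * (∫ l, Φ l) * Complex.exp (-((C : ℂ) * x)) := by
        rw [Complex.real_smul]
        push_cast
        ring
end
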